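/- For strictly positive policies π and π₀ on T: if KL(Rπ₀ ‖ π) < KL(Rπ₀ ‖ π₀), then J(π) > J(π₀). That is, any policy that is strictly closer (in KL) to the improved policy Rπ₀ than π₀ itself achieves strictly larger expected return, even when the KL projection is only carried out approximately. -/

import Mathlib

/-- Expected return `J(π) = ∑ τ, R τ * π τ`. -/
noncomputable def Jexp {T : Type*} [Fintype T] (R π : T → ℝ) : ℝ := ∑ τ, R τ * π τ

/-- Improved policy `Rπ(τ) = R τ * π τ / J(π)`. -/
noncomputable def impPolicy {T : Type*} [Fintype T] (R π : T → ℝ) (τ : T) : ℝ :=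
  R τ * π τ / Jexp R π

/-- KL divergence between pmfs on a finite type (with `0 * log 0 = 0`). -/
noncomputable def klDiv {T : Type*} [Fintype T] (p q : T → ℝ) : ℝ :=
  ∑ τ, p τ * Real.log (p τ / q τ)

/-- Approximate projection still improves: if `KL(Rπ₀ ‖ π) < KL(Rπ₀ ‖ π₀)`
then `J(π) > J(π₀)`. -/
theorem approximate_projection_improves
    {T : Type*} [Fintype T] [Nonempty T]
    (R π π₀ : T → ℝ) (hR : ∀ τ, 0 < R τ)
    (hπpos : ∀ τ, 0 < π τ) (hπsum : ∑ τ, π τ = 1)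
    (hπ₀pos : ∀ τ, 0 < π₀ τ) (hπ₀sum : ∑ τ, π₀ τ = 1)
    (hkl : klDiv (impPolicy R π₀) π < klDiv (impPolicy R π₀) π₀) :
    Jexp R π₀ < Jexp R π := by
  set J₀ := Jexp R π₀ with hJ₀
  have hJ₀pos : 0 < J₀ := by
    apply Finset.sum_pos
    · intro τ _; exact mul_pos (hR τ) (hπ₀pos τ)
    · exact Finset.univ_nonempty
  set p : T → ℝ := impPolicy R π₀ with hp
  have hppos : ∀ τ, 0 < p τ := fun τ =>
    div_pos (mul_pos (hR τ) (hπ₀pos τ)) hJ₀pos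
  -- 0 < ∑ p τ * log (π τ / π₀ τ)
  have key : 0 < ∑ τ, p τ * Real.log (π τ / π₀ τ) := by
    have h := sub_pos.mpr hkl
    calc 0 < klDiv p π₀ - klDiv p π := h
    _ = ∑ τ, p τ * Real.log (π τ / π₀ τ) := by
        unfold klDiv
        rw [← Finset.sum_sub_distrib]
        apply Finset.sum_congr rfl
        intro τ _
        rw [← mul_sub, Real.log_div (ne_of_gt (hppos τ)) (ne_of_gt (hπ₀pos τ)),
          Real.log_div (ne_of_gt (hppos τ)) (ne_of_gt (hπpos τ)),
          Real.log_div (ne_of_gt (hπpos τ)) (ne_of_gt (hπ₀pos τ))]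
        ring
  -- termwise log x ≤ x - 1
  have bound : ∑ τ, p τ * Real.log (π τ / π₀ τ) ≤ ∑ τ, p τ * (π τ / π₀ τ - 1) := by
    apply Finset.sum_le_sum
    intro τ _
    exact mul_le_mul_of_nonneg_left
      (Real.log_le_sub_one_of_pos (div_pos (hπpos τ) (hπ₀pos τ))) (le_of_lt (hppos τ))
  have hsum : ∑ τ, p τ * (π τ / π₀ τ - 1) = Jexp R π / J₀ - 1 := by
    have h1 : ∀ τ, p τ * (π τ / π₀ τ - 1) = R τ * π τ / J₀ - p τ := by
      intro τ
      have : p τ * (π τ / π₀ τ) = R τ * π τ / J₀ := by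
        have h0 : π₀ τ ≠ 0 := ne_of_gt (hπ₀pos τ)
        have hJn : J₀ ≠ 0 := ne_of_gt hJ₀pos
        simp only [hp, impPolicy, ← hJ₀]
        field_simp
      rw [mul_sub, this, mul_one]
    rw [Finset.sum_congr rfl (fun τ _ => h1 τ), Finset.sum_sub_distrib]
    have h2 : ∑ τ, p τ = 1 := by
      simp only [hp, impPolicy, ← hJ₀]
      rw [← Finset.sum_div]
      exact div_self (ne_of_gt hJ₀pos)
    rw [h2, ← Finset.sum_div]
    rfl
  have : 0 < Jexp R π / J₀ - 1 := lt_of_lt_of_le key (hsum ▸ bound)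
  have : 1 < Jexp R π / J₀ := by linarith
  calc J₀ = 1 * J₀ := (one_mul _).symm
  _ < (Jexp R π / J₀) * J₀ := by exact mul_lt_mul_of_pos_right this hJ₀pos
  _ = Jexp R π := div_mul_cancel₀ _ (ne_of_gt hJ₀pos)
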